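/- Assume f : (Fin n → Bool) → Bool is ε-far from every k-junta with respect to a probability distribution D on Fin n → Bool, and S is a set of coordinates with |S| ≤ k. Then, when x is sampled from D and T is an independent uniformly random subset of the complement of S, the probability that f(x) ≠ f(x^T) is at least ε/2. -/

import Mathlib

/-- `x` with the bits in `T` flipped. -/
def flipSet {n : ℕ} (x : Fin n → Bool) (T : Finset (Fin n)) : Fin n → Bool :=
  fun i => if i ∈ T then !x i else x i

/-- `f` is a `k`-junta: it depends on at most `k` coordinates. -/
def IsJunta {n : ℕ} (k : ℕ) (f : (Fin n → Bool) → Bool) : Prop :=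
  ∃ A : Finset (Fin n), A.card ≤ k ∧
    ∀ x y : Fin n → Bool, (∀ i ∈ A, x i = y i) → f x = f y

/-- If `f` is `ε`-far from every `k`-junta w.r.t. `D` and `|S| ≤ k`, then sampling
`x ∼ D` and a uniformly random subset `T` of the complement of `S`, we have
`f(x) ≠ f(x^T)` with probability at least `ε/2`. -/
theorem generate_cube_success_probability
    {n k : ℕ} (ε : ℝ) (f : (Fin n → Bool) → Bool)
    (D : (Fin n → Bool) → ℝ) (hD0 : ∀ x, 0 ≤ D x) (hD1 : ∑ x : Fin n → Bool, D x = 1)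
    (hfar : ∀ h : (Fin n → Bool) → Bool, IsJunta k h →
      ε ≤ ∑ x : Fin n → Bool, (if f x ≠ h x then D x else 0))
    (S : Finset (Fin n)) (hS : S.card ≤ k) :
    ε / 2 ≤ ∑ x : Fin n → Bool, ∑ T ∈ Sᶜ.powerset,
      D x * ((1 : ℝ) / 2 ^ Sᶜ.card) * (if f x ≠ f (flipSet x T) then 1 else 0) := by
  classical
  -- counting function: number of T ⊆ Sᶜ with f (flipSet x T) = true
  set C : (Fin n → Bool) → ℕ :=
    fun x => (Sᶜ.powerset.filter (fun T => f (flipSet x T) = true)).card with hCdef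
  set N : (Fin n → Bool) → ℕ :=
    fun x => (Sᶜ.powerset.filter (fun T => f x ≠ f (flipSet x T))).card with hNdef
  set h : (Fin n → Bool) → Bool :=
    fun x => decide (2 ^ Sᶜ.card ≤ 2 * C x) with hhdef
  -- key flip identity
  have flip_eq : ∀ x y : Fin n → Bool, (∀ i ∈ S, x i = y i) → ∀ T ∈ Sᶜ.powerset,
      flipSet y (symmDiff T (Sᶜ.filter (fun i => x i ≠ y i))) = flipSet x T := by
    intro x y hxy T hT
    rw [Finset.mem_powerset] at hT
    funext i
    by_cases hiS : i ∈ S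
    · have hiT : i ∉ T := fun hm => (Finset.mem_compl.mp (hT hm)) hiS
      have hiD : i ∉ Sᶜ.filter (fun i => x i ≠ y i) := by
        simp [Finset.mem_filter, hiS]
      have : i ∉ symmDiff T (Sᶜ.filter (fun i => x i ≠ y i)) := by
        simp [Finset.mem_symmDiff, hiT, hiD]
      simp [flipSet, this, hiT, hxy i hiS]
    · have hiSc : i ∈ Sᶜ := Finset.mem_compl.mpr hiS
      by_cases hxyi : x i = y i
      · have hiD : i ∉ Sᶜ.filter (fun i => x i ≠ y i) := by
          simp [Finset.mem_filter, hxyi]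
        by_cases hiT : i ∈ T <;>
          simp [flipSet, Finset.mem_symmDiff, hiT, hiD, hxyi]
      · have hiD : i ∈ Sᶜ.filter (fun i => x i ≠ y i) := by
          simp [Finset.mem_filter, hiSc, hxyi]
        have hxyi' : y i = !x i := by
          cases hx : x i <;> cases hy : y i <;> simp_all
        by_cases hiT : i ∈ T <;>
          simp [flipSet, Finset.mem_symmDiff, hiT, hiD, hxyi']
  -- C only depends on coordinates in S
  have hCle : ∀ x y : (Fin n → Bool), (∀ i ∈ S, x i = y i) → C x ≤ C y := by
    intro x y hxy
    apply Finset.card_le_card_of_injOn (fun T => symmDiff T (Sᶜ.filter (fun i => x i ≠ y i)))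
    · intro T hT
      rw [Finset.mem_coe, Finset.mem_filter, Finset.mem_powerset] at hT ⊢
      refine ⟨le_trans symmDiff_le_sup (sup_le hT.1 (Finset.filter_subset _ _)), ?_⟩
      rw [flip_eq x y hxy T (Finset.mem_powerset.mpr hT.1)]
      exact hT.2
    · intro a _ b _ hab
      have := congrArg (fun U => symmDiff U (Sᶜ.filter (fun i => x i ≠ y i))) hab
      simpa [symmDiff_symmDiff_cancel_right] using this
  have hCeq : ∀ x y : (Fin n → Bool), (∀ i ∈ S, x i = y i) → C x = C y := fun x y hxy =>
    le_antisymm (hCle x y hxy) (hCle y x (fun i hi => (hxy i hi).symm))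
  have hjunta : IsJunta k h := by
    refine ⟨S, hS, fun x y hxy => ?_⟩
    simp only [hhdef, hCeq x y hxy]
  -- partition: C x + (number with f (flipSet x T) = false) = 2 ^ |Sᶜ|
  have hpart : ∀ x, C x + (Sᶜ.powerset.filter (fun T => ¬ (f (flipSet x T) = true))).card
      = 2 ^ Sᶜ.card := by
    intro x
    rw [hCdef, Finset.card_filter_add_card_filter_not, Finset.card_powerset]
  -- key claim: f x ≠ h x → 2 ^ |Sᶜ| ≤ 2 * N x
  have hkey : ∀ x, f x ≠ h x → 2 ^ Sᶜ.card ≤ 2 * N x := by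
    intro x hne
    cases hfx : f x with
    | true =>
      have hhx : h x = false := by
        cases hhx : h x
        · rfl
        · exact absurd (hfx.trans hhx.symm) hne
      have hClt : 2 * C x < 2 ^ Sᶜ.card := by
        by_contra hcon
        simp only [hhdef, decide_eq_false_iff_not, not_le, not_lt] at hhx hcon
        omega
      have hNeq : N x = (Sᶜ.powerset.filter (fun T => ¬ (f (flipSet x T) = true))).card := by
        simp only [hNdef]
        congr 1
        apply Finset.filter_congr
        intro T _
        rw [hfx]
        cases f (flipSet x T) <;> simp
      have := hpart x
      omega
    | false =>
      have hhx : h x = true := by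
        cases hhx : h x
        · exact absurd (hfx.trans hhx.symm) hne
        · rfl
      have hCge : 2 ^ Sᶜ.card ≤ 2 * C x := by
        simpa [hhdef] using hhx
      have hNeq : N x = C x := by
        simp only [hNdef, hCdef]
        congr 1
        apply Finset.filter_congr
        intro T _
        rw [hfx]
        cases f (flipSet x T) <;> simp
      omega
  -- inner sum computation
  have inner : ∀ x, ∑ T ∈ Sᶜ.powerset,
      D x * ((1 : ℝ) / 2 ^ Sᶜ.card) * (if f x ≠ f (flipSet x T) then 1 else 0)
      = D x * ((1 : ℝ) / 2 ^ Sᶜ.card) * (N x : ℝ) := by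
    intro x
    rw [← Finset.mul_sum, Finset.sum_boole, hNdef]
  have hpow : (0 : ℝ) < 2 ^ Sᶜ.card := by positivity
  -- pointwise bound
  have hpt : ∀ x, (1 / 2 : ℝ) * (if f x ≠ h x then D x else 0)
      ≤ D x * ((1 : ℝ) / 2 ^ Sᶜ.card) * (N x : ℝ) := by
    intro x
    by_cases hne : f x ≠ h x
    · rw [if_pos hne]
      have h2N : (2 : ℝ) ^ Sᶜ.card ≤ 2 * N x := by
        have := hkey x hne
        calc (2 : ℝ) ^ Sᶜ.card = ((2 ^ Sᶜ.card : ℕ) : ℝ) := by push_cast; ring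
          _ ≤ ((2 * N x : ℕ) : ℝ) := by exact_mod_cast this
          _ = 2 * N x := by push_cast; ring
      have hfrac : (1 / 2 : ℝ) ≤ (1 : ℝ) / 2 ^ Sᶜ.card * N x := by
        rw [div_mul_eq_mul_div, le_div_iff₀ hpow]
        linarith
      calc (1 / 2 : ℝ) * D x ≤ ((1 : ℝ) / 2 ^ Sᶜ.card * N x) * D x := by
            apply mul_le_mul_of_nonneg_right hfrac (hD0 x)
        _ = D x * ((1 : ℝ) / 2 ^ Sᶜ.card) * (N x : ℝ) := by ring
    · rw [if_neg hne, mul_zero]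
      exact mul_nonneg (mul_nonneg (hD0 x) (by positivity)) (Nat.cast_nonneg _)
  -- conclude
  have hsum : ∑ x : Fin n → Bool, (1 / 2 : ℝ) * (if f x ≠ h x then D x else 0)
      ≤ ∑ x : Fin n → Bool, ∑ T ∈ Sᶜ.powerset,
        D x * ((1 : ℝ) / 2 ^ Sᶜ.card) * (if f x ≠ f (flipSet x T) then 1 else 0) := by
    apply Finset.sum_le_sum
    intro x _
    rw [inner x]
    exact hpt x
  have hfar' := hfar h hjunta
  calc ε / 2 = (1 / 2 : ℝ) * ε := by ring
    _ ≤ (1 / 2 : ℝ) * ∑ x : Fin n → Bool, (if f x ≠ h x then D x else 0) := by linarith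
    _ = ∑ x : Fin n → Bool, (1 / 2 : ℝ) * (if f x ≠ h x then D x else 0) := by
        rw [Finset.mul_sum]
    _ ≤ _ := hsum
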